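/- In the pointwise setting of a spacelike codimension-2 immersion, there exists a nonzero ξ ∈ W with Ã_ξ = 0 if and only if for all η₁, η₂ ∈ W the shear operators satisfy the Cauchy–Schwarz equality (tr(Ã_{η₁} ∘ Ã_{η₂}))² = tr(Ã_{η₁} ∘ Ã_{η₁}) · tr(Ã_{η₂} ∘ Ã_{η₂}). -/

import Mathlib

open scoped RealInnerProductSpace

open Module LinearMap in
/-- If `S` is self-adjoint and `tr (S ∘ S) = 0` then `S = 0`; also `tr (S ∘ S) ≥ 0`. -/
private lemma trace_sq_aux {V : Type*} [NormedAddCommGroup V] [InnerProductSpace ℝ V]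
    [FiniteDimensional ℝ V] (S : V →ₗ[ℝ] V) (hS : ∀ x y : V, ⟪S x, y⟫ = ⟪x, S y⟫) :
    LinearMap.trace ℝ V (S ∘ₗ S) = ∑ i, ‖S (stdOrthonormalBasis ℝ V i)‖ ^ 2 := by
  classical
  set b := stdOrthonormalBasis ℝ V
  rw [LinearMap.trace_eq_matrix_trace ℝ b.toBasis, Matrix.trace]
  congr 1
  funext i
  rw [Matrix.diag_apply, LinearMap.toMatrix_apply]
  have : b.toBasis.repr ((S ∘ₗ S) (b.toBasis i)) i
      = ⟪b i, S (S (b i))⟫ := by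
    rw [OrthonormalBasis.coe_toBasis_repr_apply, OrthonormalBasis.repr_apply_apply]
    simp [b]
  rw [this, ← hS, real_inner_self_eq_norm_sq]

open Module LinearMap in
private lemma trace_sq_nonneg {V : Type*} [NormedAddCommGroup V] [InnerProductSpace ℝ V]
    [FiniteDimensional ℝ V] (S : V →ₗ[ℝ] V) (hS : ∀ x y : V, ⟪S x, y⟫ = ⟪x, S y⟫) :
    0 ≤ LinearMap.trace ℝ V (S ∘ₗ S) := by
  rw [trace_sq_aux S hS]
  positivity

open Module LinearMap in
private lemma trace_sq_zero {V : Type*} [NormedAddCommGroup V] [InnerProductSpace ℝ V]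
    [FiniteDimensional ℝ V] (S : V →ₗ[ℝ] V) (hS : ∀ x y : V, ⟪S x, y⟫ = ⟪x, S y⟫)
    (h0 : LinearMap.trace ℝ V (S ∘ₗ S) = 0) : S = 0 := by
  rw [trace_sq_aux S hS] at h0
  have hz : ∀ i, S (stdOrthonormalBasis ℝ V i) = 0 := by
    intro i
    have := (Finset.sum_eq_zero_iff_of_nonneg (fun i _ => by positivity)).1 h0 i (by simp)
    have : ‖S (stdOrthonormalBasis ℝ V i)‖ = 0 := by
      nlinarith [norm_nonneg (S (stdOrthonormalBasis ℝ V i))]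
    simpa using this
  refine (stdOrthonormalBasis ℝ V).toBasis.ext fun i => ?_
  simpa using hz i

theorem stmt7
    {n : ℕ} (hn : 1 ≤ n)
    {V : Type*} [NormedAddCommGroup V] [InnerProductSpace ℝ V] [FiniteDimensional ℝ V]
    (hV : Module.finrank ℝ V = n)
    {W : Type*} [AddCommGroup W] [Module ℝ W] [FiniteDimensional ℝ W]
    (hW : Module.finrank ℝ W = 2)
    (gbar : W →ₗ[ℝ] W →ₗ[ℝ] ℝ)
    (hgsymm : ∀ ξ η : W, gbar ξ η = gbar η ξ)
    (hgnd : ∀ ξ : W, (∀ η : W, gbar ξ η = 0) → ξ = 0)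
    (h : V →ₗ[ℝ] V →ₗ[ℝ] W) (hsymm : ∀ X Y : V, h X Y = h Y X)
    (A : W →ₗ[ℝ] V →ₗ[ℝ] V)
    (hAsa : ∀ (ξ : W) (X Y : V), ⟪A ξ X, Y⟫ = ⟪X, A ξ Y⟫)
    (hAh : ∀ (ξ : W) (X Y : V), ⟪A ξ X, Y⟫ = gbar (h X Y) ξ)
    (At : W → (V →ₗ[ℝ] V))
    (hAt : ∀ ξ : W, At ξ = A ξ - ((LinearMap.trace ℝ V (A ξ)) / (n : ℝ)) • (LinearMap.id : V →ₗ[ℝ] V))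
    :
    (∃ ξ : W, ξ ≠ 0 ∧ At ξ = 0) ↔
      ∀ η₁ η₂ : W,
        (LinearMap.trace ℝ V (At η₁ ∘ₗ At η₂)) ^ 2
          = LinearMap.trace ℝ V (At η₁ ∘ₗ At η₁) * LinearMap.trace ℝ V (At η₂ ∘ₗ At η₂) := by
  classical
  -- the shear operator as a linear map
  set B : W →ₗ[ℝ] (V →ₗ[ℝ] V) :=
    A - (((n : ℝ)⁻¹ • (LinearMap.trace ℝ V ∘ₗ A)).smulRight (LinearMap.id : V →ₗ[ℝ] V))
    with hBdef
  have hB : ∀ ξ : W, At ξ = B ξ := by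
    intro ξ
    rw [hAt ξ, hBdef]
    simp [LinearMap.smulRight_apply, div_eq_inv_mul, mul_smul]
  -- self-adjointness of B ξ
  have hBsa : ∀ (ξ : W) (x y : V), ⟪B ξ x, y⟫ = ⟪x, B ξ y⟫ := by
    intro ξ x y
    rw [← hB ξ, hAt ξ]
    simp only [LinearMap.sub_apply, LinearMap.smul_apply, LinearMap.id_apply,
      inner_sub_left, inner_sub_right, real_inner_smul_left, real_inner_smul_right,
      hAsa ξ x y]
  constructor
  · rintro ⟨ξ, hξ, hAξ⟩ η₁ η₂
    have hBξ : B ξ = 0 := (hB ξ) ▸ hAξ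
    -- the range of B has dimension ≤ 1
    have hker : 1 ≤ Module.finrank ℝ (LinearMap.ker B) := by
      have h1 : Module.finrank ℝ (ℝ ∙ ξ) = 1 := finrank_span_singleton hξ
      have h2 : (ℝ ∙ ξ) ≤ LinearMap.ker B := by
        rw [Submodule.span_singleton_le_iff_mem, LinearMap.mem_ker]
        exact hBξ
      calc 1 = Module.finrank ℝ (ℝ ∙ ξ) := h1.symm
        _ ≤ Module.finrank ℝ (LinearMap.ker B) := Submodule.finrank_mono h2
    have hsum := LinearMap.finrank_range_add_finrank_ker B
    rw [hW] at hsum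
    have hrange : Module.finrank ℝ (LinearMap.range B) ≤ 1 := by omega
    rw [finrank_le_one_iff] at hrange
    obtain ⟨v, hv⟩ := hrange
    obtain ⟨c₁, hc₁⟩ := hv ⟨B η₁, LinearMap.mem_range_self B η₁⟩
    obtain ⟨c₂, hc₂⟩ := hv ⟨B η₂, LinearMap.mem_range_self B η₂⟩
    have hc₁' : B η₁ = c₁ • (v : V →ₗ[ℝ] V) := by
      have := congrArg Subtype.val hc₁; simpa using this.symm
    have hc₂' : B η₂ = c₂ • (v : V →ₗ[ℝ] V) := by
      have := congrArg Subtype.val hc₂; simpa using this.symm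
    simp only [hB, hc₁', hc₂', LinearMap.smul_comp, LinearMap.comp_smul, map_smul,
      smul_eq_mul]
    ring
  · intro hcs
    -- take a basis of W
    set b2 : Module.Basis (Fin 2) ℝ W := Module.finBasisOfFinrankEq ℝ W hW with hb2
    set e₁ := b2 0
    set e₂ := b2 1
    by_cases h1 : B e₁ = 0
    · exact ⟨e₁, b2.ne_zero 0, by rw [hB]; exact h1⟩
    · -- Q e₁ e₁ ≠ 0
      set Q : W → W → ℝ := fun x y => LinearMap.trace ℝ V (B x ∘ₗ B y) with hQ
      have hQsymm : ∀ x y, Q x y = Q y x := fun x y => LinearMap.trace_comp_comm' _ _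
      have hq1 : Q e₁ e₁ ≠ 0 := fun h0 => h1 (trace_sq_zero _ (hBsa e₁) h0)
      set c : ℝ := Q e₁ e₂
      refine ⟨(Q e₁ e₁) • e₂ - c • e₁, ?_, ?_⟩
      · intro h0
        apply hq1
        have := congrArg (fun w => b2.repr w 1) h0
        simpa [e₁, e₂, Module.Basis.repr_self, Finsupp.single_apply] using this
      · rw [hB]
        apply trace_sq_zero _ (hBsa _)
        have hexp : Q ((Q e₁ e₁) • e₂ - c • e₁) ((Q e₁ e₁) • e₂ - c • e₁)
            = (Q e₁ e₁)^2 * Q e₂ e₂ - (Q e₁ e₁) * c * Q e₂ e₁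
              - c * (Q e₁ e₁) * Q e₁ e₂ + c^2 * Q e₁ e₁ := by
          simp only [hQ, map_sub, map_smul, LinearMap.sub_comp, LinearMap.comp_sub,
            LinearMap.smul_comp, LinearMap.comp_smul, LinearMap.map_sub, LinearMap.map_smul,
            smul_eq_mul]
          ring
        have hcs' := hcs e₁ e₂
        simp only [hB] at hcs'
        show Q ((Q e₁ e₁) • e₂ - c • e₁) ((Q e₁ e₁) • e₂ - c • e₁) = 0
        rw [hexp, hQsymm e₂ e₁]
        have hthis : c ^ 2 = Q e₁ e₁ * Q e₂ e₂ := hcs'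
        have hc : Q e₁ e₂ = c := rfl
        rw [hc]
        linear_combination (-(Q e₁ e₁)) * hthis
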